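/- Assume (A1). Let f_0 ∈ H_1, let u = (u_m)_{m≥0} be a positive decreasing sequence, C > 0, r a nonnegative integer, and K a positive number with K ≤ 1. Then for every positive integer n, every estimator f̂ ∈ S_n and every integer m ≥ r: sup over f ∈ (f_0 + C_{f_0}(K,u,C,r)) ∩ H_1 of E_f‖f̂ − f‖_H² is at least ( min{ K / K_{∞,f_0}(V_{m+2} ⊖ V_m), C·u_{m+1} } )² · ( π_{f_0}({0,…,m−1}) )^n, where V_{m+2} ⊖ V_m denotes V_{m+2} ∩ V_m^⊥. -/

import Mathlib

/- Theorem 1 of Roueff–Rydén (lower bound on the minimax MISE for mixtures of discrete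
distributions, under (A1)): for `f₀ ∈ H₁`, a positive decreasing sequence `u`, `C > 0`,
`r ∈ ℤ₊`, `0 < K ≤ 1`, any `n ≥ 1`, any estimator `f̂ ∈ S_n` and any `m ≥ r`,
`sup_{f ∈ (f₀ + C_{f₀}(K,u,C,r)) ∩ H₁} E_f ‖f̂ - f‖² ≥
  (K / K_{∞,f₀}(V_{m+2} ⊖ V_m) ∧ C u_{m+1})² (π_{f₀}{0,…,m-1})^n`.
Here `X = ℤ₊` with counting measure, `Θ ⊆ ℝ^d` Borel, `H = L²(ν)`, `V_m = span(Π1_k, k<m)`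
(`Π1_k : θ ↦ π_θ(k)`, represented in `H` by `Pi1 k`), `‖f - Proj_{V_m} f‖ = dist(f, V_m)`,
`‖·‖_{∞,f₀}` the weighted essential sup norm (with `0/0 = 0`, `s/0 = ∞`, via ℝ≥0∞ division)
and `K_{∞,f₀}(V) = sup{‖f‖_{∞,f₀} : f ∈ V, ‖f‖ = 1}`. -/

open MeasureTheory ENNReal

set_option maxHeartbeats 2000000

noncomputable section

/-- Weighted essential sup norm `‖f‖_{∞,f₀} = ν-ess sup |f|/f₀`. -/
def wnorm {α : Type*} [MeasurableSpace α] {ν : Measure α} (f f₀ : Lp ℝ 2 ν) : ℝ≥0∞ :=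
  essSup (fun θ => ENNReal.ofReal |f θ| / ENNReal.ofReal (f₀ θ)) ν

/-- `K_{∞,f₀}(V)`. -/
def Kinf {α : Type*} [MeasurableSpace α] {ν : Measure α} (f₀ : Lp ℝ 2 ν)
    (V : Set (Lp ℝ 2 ν)) : ℝ≥0∞ :=
  ⨆ (g : Lp ℝ 2 ν) (_ : g ∈ V ∧ ‖g‖ = 1), wnorm g f₀

/-- `V_m = span(Π 1_k, 0 ≤ k < m)`. -/
def Vspan {α : Type*} [MeasurableSpace α] {ν : Measure α} (Pi1 : ℕ → Lp ℝ 2 ν) (m : ℕ) :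
    Submodule ℝ (Lp ℝ 2 ν) :=
  Submodule.span ℝ (Pi1 '' Set.Iio m)

/-- The approximation class `C(u,C,r)` (distance to `V_m` in place of `‖f - Proj_{V_m} f‖`). -/
def classV {α : Type*} [MeasurableSpace α] {ν : Measure α} (Pi1 : ℕ → Lp ℝ 2 ν)
    (u : ℕ → ℝ) (C : ℝ) (r : ℕ) : Set (Lp ℝ 2 ν) :=
  {f | ∀ m, r ≤ m → Metric.infDist f (Vspan Pi1 m : Set (Lp ℝ 2 ν)) ≤ C * u m}

/-- Probability densities belonging to `H`. -/
def H1 {α : Type*} [MeasurableSpace α] (ν : Measure α) : Set (Lp ℝ 2 ν) :=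
  {f | 0 ≤ᵐ[ν] ⇑f ∧ ∫ θ, f θ ∂ν = 1}

/-- The mixture distribution `π_f` on `ℤ₊`. -/
def mixN {α : Type*} [MeasurableSpace α] (ν : Measure α) (π : α → ℕ → ℝ)
    (f : Lp ℝ 2 ν) : Measure ℕ :=
  Measure.sum fun k => ENNReal.ofReal (∫ θ, π θ k * f θ ∂ν) • Measure.dirac k

/-- `E_f ‖est - f‖²` for `n` i.i.d. observations from `π_f`. -/
def riskN {α : Type*} [MeasurableSpace α] (ν : Measure α) (π : α → ℕ → ℝ) (n : ℕ)
    (f : Lp ℝ 2 ν) (est : (Fin n → ℕ) → Lp ℝ 2 ν) : ℝ≥0∞ :=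
  ∫⁻ x, (‖est x - f‖₊ : ℝ≥0∞) ^ 2 ∂(Measure.pi fun _ : Fin n => mixN ν π f)

section Helpers

variable {α : Type*} [MeasurableSpace α] {ν : Measure α}

lemma wnorm_smul (c : ℝ) (g f₀ : Lp ℝ 2 ν) :
    wnorm (c • g) f₀ = ENNReal.ofReal |c| * wnorm g f₀ := by
  unfold wnorm
  rw [← ENNReal.essSup_const_mul]
  refine essSup_congr_ae ?_
  filter_upwards [Lp.coeFn_smul c g] with θ hθ
  rw [hθ, Pi.smul_apply, smul_eq_mul, abs_mul, ENNReal.ofReal_mul (abs_nonneg c),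
    mul_div_assoc]

lemma wnorm_neg (g f₀ : Lp ℝ 2 ν) : wnorm (-g) f₀ = wnorm g f₀ := by
  unfold wnorm
  refine essSup_congr_ae ?_
  filter_upwards [Lp.coeFn_neg g] with θ hθ
  rw [hθ, Pi.neg_apply, abs_neg]

lemma mixN_apply (π : α → ℕ → ℝ) (f : Lp ℝ 2 ν) (s : Set ℕ) :
    mixN ν π f s
      = ∑' k, ENNReal.ofReal (∫ θ, π θ k * f θ ∂ν) * s.indicator 1 k := by
  rw [mixN, Measure.sum_apply _ (show MeasurableSet s by trivial)]
  refine tsum_congr fun k => ?_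
  rw [Measure.smul_apply, Measure.dirac_apply' _ (show MeasurableSet s by trivial), smul_eq_mul]

lemma mixN_Iio (π : α → ℕ → ℝ) (f : Lp ℝ 2 ν) (m : ℕ) :
    mixN ν π f (Set.Iio m)
      = ∑ k ∈ Finset.range m, ENNReal.ofReal (∫ θ, π θ k * f θ ∂ν) := by
  rw [mixN_apply]
  rw [tsum_eq_sum (s := Finset.range m) (fun k hk => by
    rw [Set.indicator_of_notMem (by simpa using hk), mul_zero])]
  refine Finset.sum_congr rfl fun k hk => ?_
  rw [Set.indicator_of_mem (by simpa using Finset.mem_range.1 hk), Pi.one_apply, mul_one]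

lemma mixN_sigmaFinite (π : α → ℕ → ℝ) (f : Lp ℝ 2 ν) : SigmaFinite (mixN ν π f) := by
  refine Measure.sigmaFinite_of_countable (S := Set.range fun k : ℕ => ({k} : Set ℕ))
    (Set.countable_range _) ?_ ?_
  · rintro s ⟨k, rfl⟩
    rw [mixN_apply, tsum_eq_single k (fun j hj => by
      rw [Set.indicator_of_notMem (by simpa using hj), mul_zero])]
    · simp only [Set.indicator_of_mem (Set.mem_singleton k), Pi.one_apply, mul_one]
      exact ENNReal.ofReal_lt_top
  · ext x; simp

lemma mixN_restrict_eq (π : α → ℕ → ℝ) (f f' : Lp ℝ 2 ν) (m : ℕ)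
    (h : ∀ k, k < m → (∫ θ, π θ k * f θ ∂ν) = ∫ θ, π θ k * f' θ ∂ν) :
    (mixN ν π f).restrict (Set.Iio m) = (mixN ν π f').restrict (Set.Iio m) := by
  ext s hs
  rw [Measure.restrict_apply hs, Measure.restrict_apply hs, mixN_apply, mixN_apply]
  refine tsum_congr fun k => ?_
  by_cases hk : k ∈ s ∩ Set.Iio m
  · rw [h k hk.2]
  · simp [Set.indicator_of_notMem hk]

lemma pi_restrict_pi {ι : Type*} [Fintype ι] {β : ι → Type*} [∀ i, MeasurableSpace (β i)]
    (μ : ∀ i, Measure (β i)) [∀ i, SigmaFinite (μ i)] (s : ∀ i, Set (β i))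
    (hs : ∀ i, MeasurableSet (s i)) :
    Measure.pi (fun i => (μ i).restrict (s i)) = (Measure.pi μ).restrict (Set.univ.pi s) := by
  refine Measure.pi_eq fun t ht => ?_
  rw [Measure.restrict_apply (MeasurableSet.univ_pi ht), ← Set.pi_inter_distrib, Measure.pi_pi]
  exact Finset.prod_congr rfl fun i _ => (Measure.restrict_apply (ht i)).symm

lemma ae_abs_le_of_wnorm_le {f₀ g : Lp ℝ 2 ν} {K : ℝ} (hK : 0 ≤ K)
    (hf₀ : 0 ≤ᵐ[ν] ⇑f₀) (h : wnorm g f₀ ≤ ENNReal.ofReal K) :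
    ∀ᵐ θ ∂ν, |g θ| ≤ K * f₀ θ := by
  filter_upwards [ENNReal.ae_le_essSup
    (fun θ => ENNReal.ofReal |g θ| / ENNReal.ofReal (f₀ θ)), hf₀] with θ h1 h2
  simp only [Pi.zero_apply] at h2
  have h1' : ENNReal.ofReal |g θ| / ENNReal.ofReal (f₀ θ) ≤ ENNReal.ofReal K := h1.trans h
  by_cases hz : f₀ θ = 0
  · rcases eq_or_ne (ENNReal.ofReal |g θ|) 0 with hh | hh
    · have : |g θ| = 0 := le_antisymm (ENNReal.ofReal_eq_zero.1 hh) (abs_nonneg _)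
      rw [this, hz, mul_zero]
    · rw [hz, ENNReal.ofReal_zero, ENNReal.div_zero hh] at h1'
      exact absurd h1' (by simp)
  · have hpos : 0 < f₀ θ := lt_of_le_of_ne h2 (Ne.symm hz)
    rw [ENNReal.div_le_iff_le_mul (Or.inl (ENNReal.ofReal_pos.2 hpos).ne')
      (Or.inl ENNReal.ofReal_ne_top), ← ENNReal.ofReal_mul hK] at h1'
    exact (ENNReal.ofReal_le_ofReal_iff (mul_nonneg hK h2)).1 h1'

end Helpers

theorem statement3
    {d : ℕ} {Θ : Set (Fin d → ℝ)} (hΘ : MeasurableSet Θ)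
    (ν : Measure Θ) [SigmaFinite ν]
    (π : Θ → ℕ → ℝ)
    (hπ_meas : ∀ k, Measurable fun θ => π θ k)
    (hπ_nonneg : ∀ θ k, 0 ≤ π θ k)
    (hπ_sum : ∀ θ, HasSum (fun k => π θ k) 1)
    -- (A1): the `Π 1_k` form a linearly independent sequence in `H ∩ L¹(ν)`
    (Pi1 : ℕ → Lp ℝ 2 ν) (hPi1 : ∀ k, ⇑(Pi1 k) =ᵐ[ν] fun θ => π θ k)
    (hPi1_int : ∀ k, Integrable (fun θ => π θ k) ν)
    (hPi1_li : LinearIndependent ℝ Pi1)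
    -- data of the theorem
    (f₀ : Lp ℝ 2 ν) (hf₀ : f₀ ∈ H1 ν)
    (u : ℕ → ℝ) (hu_pos : ∀ m, 0 < u m) (hu_dec : Antitone u)
    (C : ℝ) (hC : 0 < C) (r : ℕ) (K : ℝ) (hK_pos : 0 < K) (hK_le : K ≤ 1)
    (n : ℕ) (hn : 0 < n)
    (fhat : (Fin n → ℕ) → Lp ℝ 2 ν)
    (hfhat : @Measurable _ _ _ (borel _) fhat)
    (m : ℕ) (hm : r ≤ m) :
    (min (ENNReal.ofReal K /
          Kinf f₀ ((Vspan Pi1 (m + 2) ⊓ (Vspan Pi1 m)ᗮ : Submodule ℝ (Lp ℝ 2 ν)) :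
            Set (Lp ℝ 2 ν)))
        (ENNReal.ofReal (C * u (m + 1)))) ^ 2 *
      (ENNReal.ofReal (∑ k ∈ Finset.range m, ∫ θ, π θ k * f₀ θ ∂ν)) ^ n
    ≤ ⨆ f ∈ {f | (∃ g ∈ classV Pi1 u C r, wnorm g f₀ ≤ ENNReal.ofReal K ∧ f = f₀ + g) ∧
          f ∈ H1 ν},
        riskN ν π n f fhat := by
  classical
  obtain ⟨hf₀nn, hf₀one⟩ := hf₀
  set κ : ℝ≥0∞ := Kinf f₀
    ((Vspan Pi1 (m + 2) ⊓ (Vspan Pi1 m)ᗮ : Submodule ℝ (Lp ℝ 2 ν)) : Set (Lp ℝ 2 ν)) with hκdef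
  by_cases hκtop : κ = ⊤
  · rw [hκtop, ENNReal.div_top, min_eq_left zero_le]
    simp
  -- basic facts
  have hf₀int : Integrable (⇑f₀) ν := by
    by_contra h
    rw [integral_undef h] at hf₀one
    norm_num at hf₀one
  have hπle1 : ∀ θ k, π θ k ≤ 1 := fun θ k =>
    le_hasSum (hπ_sum θ) k fun j _ => hπ_nonneg θ j
  have hπf_int : ∀ (k : ℕ) (h : Lp ℝ 2 ν), Integrable (⇑h) ν →
      Integrable (fun θ => π θ k * h θ) ν := by
    intro k h hint
    refine hint.mono ((hπ_meas k).aestronglyMeasurable.mul (Lp.aestronglyMeasurable h)) ?_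
    refine Filter.Eventually.of_forall fun θ => ?_
    rw [Real.norm_eq_abs, Real.norm_eq_abs, abs_mul, abs_of_nonneg (hπ_nonneg θ k)]
    exact mul_le_of_le_one_left (abs_nonneg _) (hπle1 θ k)
  have hVint : ∀ (M : ℕ) (g : Lp ℝ 2 ν), g ∈ Vspan Pi1 M → Integrable (⇑g) ν := by
    intro M g hg
    induction hg using Submodule.span_induction with
    | mem x hx =>
      obtain ⟨k, -, rfl⟩ := hx
      exact (hPi1_int k).congr (hPi1 k).symm
    | zero => exact (integrable_zero _ _ _).congr (Lp.coeFn_zero ℝ 2 ν).symm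
    | add x y hx hy ihx ihy => exact (ihx.add ihy).congr (Lp.coeFn_add x y).symm
    | smul c x hx ih => exact (ih.smul c).congr (Lp.coeFn_smul c x).symm
  -- dimension count
  have hfd : ∀ M : ℕ, FiniteDimensional ℝ (Vspan Pi1 M) := fun M =>
    FiniteDimensional.span_of_finite ℝ ((Set.finite_Iio M).image Pi1)
  have hfr : ∀ M : ℕ, Module.finrank ℝ (Vspan Pi1 M) = M := by
    intro M
    have hli : LinearIndependent ℝ (fun i : Fin M => Pi1 i) :=
      hPi1_li.comp _ Fin.val_injective
    have hrange : Set.range (fun i : Fin M => Pi1 i) = Pi1 '' Set.Iio M := by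
      ext x
      constructor
      · rintro ⟨i, rfl⟩; exact ⟨i, i.isLt, rfl⟩
      · rintro ⟨k, hk, rfl⟩; exact ⟨⟨k, hk⟩, rfl⟩
    have h := finrank_span_eq_card hli
    rw [hrange, Fintype.card_fin] at h
    exact h
  haveI : FiniteDimensional ℝ (Vspan Pi1 (m + 2)) := hfd (m + 2)
  -- the linear map and its kernel
  obtain ⟨g₀, hg₀mem, hg₀ne, hg₀inner, hg₀int0⟩ :
      ∃ g₀ : Lp ℝ 2 ν, g₀ ∈ Vspan Pi1 (m + 2) ∧ g₀ ≠ 0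
        ∧ (∀ k, k < m → (inner ℝ (Pi1 k) g₀ : ℝ) = 0) ∧ (∫ θ, g₀ θ ∂ν) = 0 := by
    set L : Vspan Pi1 (m + 2) →ₗ[ℝ] ℝ :=
      { toFun := fun g => ∫ θ, (g : Lp ℝ 2 ν) θ ∂ν
        map_add' := by
          intro a b
          have h : (((a + b : Vspan Pi1 (m + 2))) : Lp ℝ 2 ν) = (a : Lp ℝ 2 ν) + b := rfl
          simp only [h]
          rw [integral_congr_ae (Lp.coeFn_add _ _)]
          exact integral_add (hVint _ _ a.2) (hVint _ _ b.2)
        map_smul' := by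
          intro c a
          have h : (((c • a : Vspan Pi1 (m + 2))) : Lp ℝ 2 ν) = c • (a : Lp ℝ 2 ν) := rfl
          simp only [h, RingHom.id_apply]
          rw [integral_congr_ae (Lp.coeFn_smul _ _)]
          exact integral_smul c _ } with hLdef
    set ψ : Vspan Pi1 (m + 2) →ₗ[ℝ] (Fin m → ℝ) :=
      LinearMap.pi (fun i : Fin m =>
        (innerSL ℝ (Pi1 i)).toLinearMap ∘ₗ (Vspan Pi1 (m + 2)).subtype) with hψdef
    set φ : Vspan Pi1 (m + 2) →ₗ[ℝ] (Fin m → ℝ) × ℝ := ψ.prod L with hφdef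
    have hrank : Module.finrank ℝ (LinearMap.range φ)
        + Module.finrank ℝ (LinearMap.ker φ) = m + 2 := by
      rw [LinearMap.finrank_range_add_finrank_ker, hfr]
    have hle : Module.finrank ℝ (LinearMap.range φ) ≤ m + 1 := by
      refine (Submodule.finrank_le _).trans_eq ?_
      rw [Module.finrank_prod, Module.finrank_pi, Fintype.card_fin, Module.finrank_self]
    have hker_pos : 0 < Module.finrank ℝ (LinearMap.ker φ) := by omega
    haveI : Nontrivial (LinearMap.ker φ) := Module.nontrivial_of_finrank_pos hker_pos
    obtain ⟨x, hxne⟩ := exists_ne (0 : LinearMap.ker φ)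
    have hφx : φ (x : Vspan Pi1 (m + 2)) = 0 := x.2
    have hco : ((x : Vspan Pi1 (m + 2)) : Lp ℝ 2 ν) ≠ 0 := by
      intro h
      apply hxne
      apply Subtype.ext
      apply Subtype.ext
      simpa using h
    refine ⟨((x : Vspan Pi1 (m + 2)) : Lp ℝ 2 ν), (x : Vspan Pi1 (m + 2)).2, hco, ?_, ?_⟩
    · intro k hk
      exact congrFun (congrArg Prod.fst hφx) ⟨k, hk⟩
    · exact congrArg Prod.snd hφx
  -- normalize
  set g₁ : Lp ℝ 2 ν := ‖g₀‖⁻¹ • g₀ with hg₁def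
  have hn1 : ‖g₁‖ = 1 := norm_smul_inv_norm hg₀ne
  have hg₁mem2 : g₁ ∈ Vspan Pi1 (m + 2) := (Vspan Pi1 (m + 2)).smul_mem _ hg₀mem
  have hg₁inner : ∀ k, k < m → (inner ℝ (Pi1 k) g₁ : ℝ) = 0 := by
    intro k hk
    rw [hg₁def, real_inner_smul_right, hg₀inner k hk, mul_zero]
  have hg₁int0 : (∫ θ, g₁ θ ∂ν) = 0 := by
    rw [hg₁def, integral_congr_ae (Lp.coeFn_smul _ _)]
    simp only [Pi.smul_apply]
    rw [integral_smul, hg₀int0, smul_zero]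
  have hg₁orth : g₁ ∈ (Vspan Pi1 m)ᗮ := by
    rw [Submodule.mem_orthogonal]
    intro v hv
    induction hv using Submodule.span_induction with
    | mem x hx =>
      obtain ⟨k, hk, rfl⟩ := hx
      exact hg₁inner k hk
    | zero => exact inner_zero_left _
    | add x y hx hy ihx ihy => rw [inner_add_left, ihx, ihy, add_zero]
    | smul c x hx ih => rw [real_inner_smul_left, ih, mul_zero]
  have hwg₁ : wnorm g₁ f₀ ≤ κ := by
    rw [hκdef]
    exact le_iSup₂ (f := fun (g : Lp ℝ 2 ν) (_ : g ∈ _ ∧ ‖g‖ = 1) => wnorm g f₀) g₁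
      ⟨Submodule.mem_inf.2 ⟨hg₁mem2, hg₁orth⟩, hn1⟩
  -- choose the scale δ
  obtain ⟨δ, hδpos, hδCu, hminδ, hδκ⟩ : ∃ δ : ℝ, 0 < δ ∧ δ ≤ C * u (m + 1)
      ∧ min (ENNReal.ofReal K / κ) (ENNReal.ofReal (C * u (m + 1))) ≤ ENNReal.ofReal δ
      ∧ ENNReal.ofReal δ * κ ≤ ENNReal.ofReal K := by
    by_cases hκ0 : κ = 0
    · refine ⟨C * u (m + 1), mul_pos hC (hu_pos _), le_refl _, ?_, ?_⟩
      · rw [hκ0, ENNReal.div_zero (by simpa [ENNReal.ofReal_eq_zero] using hK_pos)]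
        exact min_le_right _ _
      · rw [hκ0, mul_zero]
        exact zero_le
    · have hκpos : 0 < κ.toReal := ENNReal.toReal_pos hκ0 hκtop
      have hdiv : ENNReal.ofReal K / κ = ENNReal.ofReal (K / κ.toReal) := by
        rw [ENNReal.ofReal_div_of_pos hκpos, ENNReal.ofReal_toReal hκtop]
      refine ⟨min (K / κ.toReal) (C * u (m + 1)),
        lt_min (div_pos hK_pos hκpos) (mul_pos hC (hu_pos _)), min_le_right _ _, ?_, ?_⟩
      · rcases min_le_iff.2 (Or.inl (le_refl (K / κ.toReal))) with h
        rcases le_total (K / κ.toReal) (C * u (m + 1)) with hle | hle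
        · rw [min_eq_left hle, hdiv]
          exact min_le_left _ _
        · rw [min_eq_right hle]
          exact min_le_right _ _
      · calc ENNReal.ofReal (min (K / κ.toReal) (C * u (m + 1))) * κ
            ≤ ENNReal.ofReal (K / κ.toReal) * κ :=
              mul_le_mul_left (ENNReal.ofReal_le_ofReal (min_le_left _ _)) κ
          _ = ENNReal.ofReal K / κ * κ := by rw [hdiv]
          _ = ENNReal.ofReal K := ENNReal.div_mul_cancel hκ0 hκtop
  set g : Lp ℝ 2 ν := δ • g₁ with hgdef
  have hgnorm : ‖g‖ = δ := by
    rw [hgdef, norm_smul, Real.norm_eq_abs, abs_of_pos hδpos, hn1, mul_one]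
  have hgmem2 : g ∈ Vspan Pi1 (m + 2) := (Vspan Pi1 (m + 2)).smul_mem _ hg₁mem2
  have hginner : ∀ k, k < m → (inner ℝ (Pi1 k) g : ℝ) = 0 := by
    intro k hk
    rw [hgdef, real_inner_smul_right, hg₁inner k hk, mul_zero]
  have hgint0 : (∫ θ, g θ ∂ν) = 0 := by
    rw [hgdef, integral_congr_ae (Lp.coeFn_smul _ _)]
    simp only [Pi.smul_apply]
    rw [integral_smul, hg₁int0, smul_zero]
  have hwg : wnorm g f₀ ≤ ENNReal.ofReal K := by
    rw [hgdef, wnorm_smul, abs_of_pos hδpos]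
    exact (mul_le_mul_right hwg₁ _).trans hδκ
  have hgae : ∀ᵐ θ ∂ν, |g θ| ≤ K * f₀ θ := ae_abs_le_of_wnorm_le hK_pos.le hf₀nn hwg
  have hgint : Integrable (⇑g) ν := hVint _ _ hgmem2
  -- the two hypotheses belong to the class
  have hmemS : ∀ g' : Lp ℝ 2 ν, g' ∈ Vspan Pi1 (m + 2) → ‖g'‖ ≤ C * u (m + 1) →
      wnorm g' f₀ ≤ ENNReal.ofReal K → Integrable (⇑g') ν → (∫ θ, g' θ ∂ν) = 0 →
      (∀ᵐ θ ∂ν, |g' θ| ≤ K * f₀ θ) →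
      (f₀ + g') ∈ {f | (∃ g ∈ classV Pi1 u C r, wnorm g f₀ ≤ ENNReal.ofReal K ∧ f = f₀ + g) ∧
          f ∈ H1 ν} := by
    intro g' hmem hnle hw hint hint0 hae
    refine ⟨⟨g', ?_, hw, rfl⟩, ?_, ?_⟩
    · intro M hM
      by_cases hM2 : m + 2 ≤ M
      · have hsub : Vspan Pi1 (m + 2) ≤ Vspan Pi1 M :=
          Submodule.span_mono (Set.image_mono (fun x hx => lt_of_lt_of_le hx hM2))
        rw [Metric.infDist_zero_of_mem (hsub hmem)]
        exact (mul_pos hC (hu_pos M)).le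
      · have h1 : Metric.infDist g' (Vspan Pi1 M : Set (Lp ℝ 2 ν)) ≤ dist g' 0 :=
          Metric.infDist_le_dist_of_mem (Vspan Pi1 M).zero_mem
        rw [dist_zero_right] at h1
        refine h1.trans (hnle.trans ?_)
        exact mul_le_mul_of_nonneg_left (hu_dec (by omega)) hC.le
    · filter_upwards [Lp.coeFn_add f₀ g', hf₀nn, hae] with θ h1 h2 h3
      simp only [Pi.zero_apply] at h2 ⊢
      rw [h1, Pi.add_apply]
      have h4 : -(K * f₀ θ) ≤ g' θ := neg_le_of_abs_le h3
      nlinarith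
    · rw [integral_congr_ae (Lp.coeFn_add f₀ g')]
      simp only [Pi.add_apply]
      rw [integral_add hf₀int hint, hf₀one, hint0, add_zero]
  have hf₁S := hmemS g hgmem2 (hgnorm.le.trans hδCu) hwg hgint hgint0 hgae
  have hf₂S' := hmemS (-g) (Submodule.neg_mem _ hgmem2)
    (by rw [norm_neg]; exact hgnorm.le.trans hδCu)
    (by rw [wnorm_neg]; exact hwg)
    (hgint.neg.congr (Lp.coeFn_neg g).symm)
    (by rw [integral_congr_ae (Lp.coeFn_neg g)]; simp [integral_neg, hgint0])
    (by filter_upwards [Lp.coeFn_neg g, hgae] with θ h1 h2; rw [h1, Pi.neg_apply, abs_neg]; exact h2)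
  rw [show f₀ + -g = f₀ - g from (sub_eq_add_neg f₀ g).symm] at hf₂S'
  set f₁ : Lp ℝ 2 ν := f₀ + g with hf₁def
  set f₂ : Lp ℝ 2 ν := f₀ - g with hf₂def
  -- mixtures agree below m
  have hkey : ∀ f' : Lp ℝ 2 ν, Integrable (⇑f') ν → ∀ k, k < m →
      (∫ θ, π θ k * (f₀ + f') θ ∂ν) = (∫ θ, π θ k * f₀ θ ∂ν) + ∫ θ, π θ k * f' θ ∂ν := by
    intro f' hint k hk
    rw [← integral_add (hπf_int k f₀ hf₀int) (hπf_int k f' hint)]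
    refine integral_congr_ae ?_
    filter_upwards [Lp.coeFn_add f₀ f'] with θ hθ
    rw [hθ, Pi.add_apply, mul_add]
  have hzint : ∀ (f' : Lp ℝ 2 ν), (∀ k, k < m → (inner ℝ (Pi1 k) f' : ℝ) = 0) →
      ∀ k, k < m → (∫ θ, π θ k * f' θ ∂ν) = 0 := by
    intro f' hf' k hk
    have h1 : (∫ θ, π θ k * f' θ ∂ν) = ∫ θ, (Pi1 k) θ * f' θ ∂ν := by
      refine integral_congr_ae ?_
      filter_upwards [hPi1 k] with θ hθ
      rw [hθ]
    rw [h1, ← hf' k hk, L2.inner_def]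
    simp [RCLike.inner_apply, mul_comm]
  have hmix₁ : ∀ k, k < m → (∫ θ, π θ k * f₁ θ ∂ν) = ∫ θ, π θ k * f₀ θ ∂ν := by
    intro k hk
    rw [hf₁def, hkey g hgint k hk, hzint g hginner k hk, add_zero]
  have hmix₂ : ∀ k, k < m → (∫ θ, π θ k * f₂ θ ∂ν) = ∫ θ, π θ k * f₀ θ ∂ν := by
    intro k hk
    have hng : ∀ k, k < m → (inner ℝ (Pi1 k) (-g) : ℝ) = 0 := by
      intro k hk
      rw [inner_neg_right, hginner k hk, neg_zero]
    have := hkey (-g) (hgint.neg.congr (Lp.coeFn_neg g).symm) k hk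
    rw [show f₀ + -g = f₂ from (sub_eq_add_neg f₀ g).symm] at this
    rw [this, hzint (-g) hng k hk, add_zero]
  haveI hSF₁ : SigmaFinite (mixN ν π f₁) := mixN_sigmaFinite π f₁
  haveI hSF₂ : SigmaFinite (mixN ν π f₂) := mixN_sigmaFinite π f₂
  set A : Set (Fin n → ℕ) := Set.univ.pi fun _ => Set.Iio m with hAdef
  set P₁ : Measure (Fin n → ℕ) := Measure.pi fun _ : Fin n => mixN ν π f₁ with hP₁def
  set P₂ : Measure (Fin n → ℕ) := Measure.pi fun _ : Fin n => mixN ν π f₂ with hP₂def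
  have hrestr : (mixN ν π f₁).restrict (Set.Iio m) = (mixN ν π f₂).restrict (Set.Iio m) :=
    mixN_restrict_eq π f₁ f₂ m (fun k hk => (hmix₁ k hk).trans (hmix₂ k hk).symm)
  have hQ : P₁.restrict A = P₂.restrict A := by
    rw [hP₁def, hP₂def, hAdef,
      ← pi_restrict_pi (fun _ : Fin n => mixN ν π f₁) (fun _ => Set.Iio m)
        (fun _ => (by trivial : MeasurableSet (Set.Iio m))),
      ← pi_restrict_pi (fun _ : Fin n => mixN ν π f₂) (fun _ => Set.Iio m)
        (fun _ => (by trivial : MeasurableSet (Set.Iio m)))]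
    exact congrArg Measure.pi (funext fun _ => hrestr)
  set S : ℝ := ∑ k ∈ Finset.range m, ∫ θ, π θ k * f₀ θ ∂ν with hSdef
  have hterm_nn : ∀ k ∈ Finset.range m, 0 ≤ ∫ θ, π θ k * f₀ θ ∂ν := by
    intro k _
    refine integral_nonneg_of_ae ?_
    filter_upwards [hf₀nn] with θ hθ
    exact mul_nonneg (hπ_nonneg θ k) hθ
  have hPA : P₁ A = (ENNReal.ofReal S) ^ n := by
    rw [hP₁def, hAdef, Measure.pi_pi]
    have hfac : mixN ν π f₁ (Set.Iio m) = ENNReal.ofReal S := by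
      rw [mixN_Iio, hSdef, ENNReal.ofReal_sum_of_nonneg hterm_nn]
      exact Finset.sum_congr rfl fun k hk => by rw [hmix₁ k (Finset.mem_range.1 hk)]
    simp [hfac, Finset.prod_const]
  -- pointwise lower bound
  have hnormdiff : ‖f₁ - f₂‖ = 2 * δ := by
    have h12 : f₁ - f₂ = (2:ℝ) • g := by
      rw [hf₁def, hf₂def, two_smul]
      abel
    rw [h12, norm_smul, hgnorm, Real.norm_ofNat]
  have hpoint : ∀ y : Lp ℝ 2 ν,
      ENNReal.ofReal (2 * δ ^ 2) ≤ (‖y - f₁‖₊ : ℝ≥0∞) ^ 2 + (‖y - f₂‖₊ : ℝ≥0∞) ^ 2 := by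
    intro y
    have htri : 2 * δ ≤ ‖y - f₁‖ + ‖y - f₂‖ := by
      calc 2 * δ = ‖f₁ - f₂‖ := hnormdiff.symm
        _ ≤ ‖f₁ - y‖ + ‖y - f₂‖ := norm_sub_le_norm_sub_add_norm_sub _ _ _
        _ = ‖y - f₁‖ + ‖y - f₂‖ := by rw [norm_sub_rev]
    have hreal : 2 * δ ^ 2 ≤ ‖y - f₁‖ ^ 2 + ‖y - f₂‖ ^ 2 := by
      nlinarith [norm_nonneg (y - f₁), norm_nonneg (y - f₂),
        sq_nonneg (‖y - f₁‖ - ‖y - f₂‖)]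
    calc ENNReal.ofReal (2 * δ ^ 2)
        ≤ ENNReal.ofReal (‖y - f₁‖ ^ 2 + ‖y - f₂‖ ^ 2) := ENNReal.ofReal_le_ofReal hreal
      _ = ENNReal.ofReal (‖y - f₁‖ ^ 2) + ENNReal.ofReal (‖y - f₂‖ ^ 2) :=
          ENNReal.ofReal_add (by positivity) (by positivity)
      _ = (‖y - f₁‖₊ : ℝ≥0∞) ^ 2 + (‖y - f₂‖₊ : ℝ≥0∞) ^ 2 := by
          rw [ENNReal.ofReal_pow (norm_nonneg _), ENNReal.ofReal_pow (norm_nonneg _),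
            ofReal_norm, ofReal_norm, enorm_eq_nnnorm, enorm_eq_nnnorm]
  -- measurability
  letI : MeasurableSpace (Lp ℝ 2 ν) := borel _
  haveI : BorelSpace (Lp ℝ 2 ν) := ⟨rfl⟩
  have hmeas : ∀ f : Lp ℝ 2 ν,
      Measurable fun x : Fin n → ℕ => (‖fhat x - f‖₊ : ℝ≥0∞) ^ 2 := by
    intro f
    have h1 : Measurable fun y : Lp ℝ 2 ν => (‖y - f‖₊ : ℝ≥0∞) ^ 2 :=
      ((((continuous_id.sub continuous_const).measurable).nnnorm).coe_nnreal_ennreal).pow_const 2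
    exact h1.comp hfhat
  -- risk bound
  have hr₁ : (∫⁻ x in A, (‖fhat x - f₁‖₊ : ℝ≥0∞) ^ 2 ∂P₁) ≤ riskN ν π n f₁ fhat :=
    setLIntegral_le_lintegral _ _
  have hr₂ : (∫⁻ x in A, (‖fhat x - f₂‖₊ : ℝ≥0∞) ^ 2 ∂P₁) ≤ riskN ν π n f₂ fhat := by
    rw [hQ]
    exact setLIntegral_le_lintegral _ _
  have hsum : ENNReal.ofReal (2 * δ ^ 2) * (ENNReal.ofReal S) ^ n
      ≤ riskN ν π n f₁ fhat + riskN ν π n f₂ fhat := by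
    calc ENNReal.ofReal (2 * δ ^ 2) * (ENNReal.ofReal S) ^ n
        = ∫⁻ _ in A, ENNReal.ofReal (2 * δ ^ 2) ∂P₁ := by rw [setLIntegral_const, hPA]
      _ ≤ ∫⁻ x in A, ((‖fhat x - f₁‖₊ : ℝ≥0∞) ^ 2 + (‖fhat x - f₂‖₊ : ℝ≥0∞) ^ 2) ∂P₁ :=
          lintegral_mono fun x => hpoint (fhat x)
      _ = (∫⁻ x in A, (‖fhat x - f₁‖₊ : ℝ≥0∞) ^ 2 ∂P₁)
            + ∫⁻ x in A, (‖fhat x - f₂‖₊ : ℝ≥0∞) ^ 2 ∂P₁ := lintegral_add_left (hmeas f₁) _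
      _ ≤ _ := add_le_add hr₁ hr₂
  -- conclude
  set R : ℝ≥0∞ := ⨆ f ∈ {f | (∃ g ∈ classV Pi1 u C r, wnorm g f₀ ≤ ENNReal.ofReal K ∧
      f = f₀ + g) ∧ f ∈ H1 ν}, riskN ν π n f fhat with hRdef
  have hle₁ : riskN ν π n f₁ fhat ≤ R := by rw [hRdef]; exact le_biSup (fun f => riskN ν π n f fhat) hf₁S
  have hle₂ : riskN ν π n f₂ fhat ≤ R := by rw [hRdef]; exact le_biSup (fun f => riskN ν π n f fhat) hf₂S'
  have hfinal : (ENNReal.ofReal δ) ^ 2 * (ENNReal.ofReal S) ^ n ≤ R := by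
    have h2 : ENNReal.ofReal (2 * δ ^ 2) = 2 * (ENNReal.ofReal δ) ^ 2 := by
      rw [ENNReal.ofReal_mul (by norm_num), ENNReal.ofReal_pow hδpos.le, ENNReal.ofReal_ofNat]
    have h3 : 2 * ((ENNReal.ofReal δ) ^ 2 * (ENNReal.ofReal S) ^ n) ≤ 2 * R := by
      rw [← mul_assoc, ← h2]
      exact hsum.trans ((add_le_add hle₁ hle₂).trans_eq (two_mul R).symm)
    exact (ENNReal.mul_le_mul_iff_right (by norm_num) (by norm_num)).1 h3
  refine le_trans ?_ hfinal
  exact mul_le_mul_left (pow_le_pow_left' hminδ 2) _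

end
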